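/- Let A = k[[s^r, s^{r-1}t, …, st^{r-1}, t^r]] be the r-th Veronese subring of the power series ring k[[s,t]] (r ≥ 2), with maximal ideal 𝔪 generated by s^{r-i}t^i, 0 ≤ i ≤ r. Set K = (s^{r-1}t, …, st^{r-1}), x = st^{r-1}, y = s^r, z = t^r. Then 𝔪K = yK + x𝔪 and 𝔪² = (y,z)𝔪. -/
import Mathlib


set_option maxHeartbeats 1000000
set_option synthInstance.maxHeartbeats 1000000
open MvPowerSeries

/-- Let `A ⊆ k[[s,t]]` be the `r`-th Veronese subring, generated
by the monomials `s^{r-i}t^i` (`0 ≤ i ≤ r`), `𝔪` its maximal ideal (generated by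
those monomials), `K = (s^{r-1}t, …, st^{r-1})`, `x = st^{r-1}`, `y = s^r`,
`z = t^r`. Then `𝔪K = yK + x𝔪` and `𝔪² = (y,z)𝔪`. -/
theorem stmt12 (k : Type*) [Field k] (r : ℕ) (hr : 2 ≤ r)
    (A : Subalgebra k (MvPowerSeries (Fin 2) k))
    (hA : A = Algebra.adjoin k
      {f : MvPowerSeries (Fin 2) k | ∃ i : ℕ, i ≤ r ∧ f = X 0 ^ (r - i) * X 1 ^ i})
    (𝔪 K : Ideal ↥A)
    (h𝔪 : 𝔪 = Ideal.span {a : ↥A | ∃ i : ℕ, i ≤ r ∧ (a : MvPowerSeries (Fin 2) k) =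
      X 0 ^ (r - i) * X 1 ^ i})
    (hK : K = Ideal.span {a : ↥A | ∃ i : ℕ, 1 ≤ i ∧ i ≤ r - 1 ∧
      (a : MvPowerSeries (Fin 2) k) = X 0 ^ (r - i) * X 1 ^ i})
    (x y z : ↥A)
    (hx : (x : MvPowerSeries (Fin 2) k) = X 0 * X 1 ^ (r - 1))
    (hy : (y : MvPowerSeries (Fin 2) k) = X 0 ^ r)
    (hz : (z : MvPowerSeries (Fin 2) k) = X 1 ^ r) :
    𝔪 * K = Ideal.span {y} * K ⊔ 𝔪 * Ideal.span {x} ∧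
      𝔪 ^ 2 = Ideal.span {y, z} * 𝔪 := by
  have M_mem : ∀ i : ℕ, i ≤ r →
      (X 0 ^ (r - i) * X 1 ^ i : MvPowerSeries (Fin 2) k) ∈ A := by
    intro i hi
    rw [hA]
    exact Algebra.subset_adjoin ⟨i, hi, rfl⟩
  have comb : ∀ a b c d e f g h : ℕ, a + c = e + g → b + d = f + h →
      (X 0 ^ a * X 1 ^ b : MvPowerSeries (Fin 2) k) * (X 0 ^ c * X 1 ^ d) =
      (X 0 ^ e * X 1 ^ f) * (X 0 ^ g * X 1 ^ h) := by
    intro a b c d e f g h h1 h2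
    rw [mul_mul_mul_comm, mul_mul_mul_comm (X 0 ^ e), ← pow_add, ← pow_add,
      ← pow_add, ← pow_add, h1, h2]
  have hx' : (x : MvPowerSeries (Fin 2) k) = X 0 ^ (r - (r - 1)) * X 1 ^ (r - 1) := by
    rw [hx, show r - (r - 1) = 1 by omega, pow_one]
  have hy' : (y : MvPowerSeries (Fin 2) k) = X 0 ^ (r - 0) * X 1 ^ 0 := by
    rw [hy, Nat.sub_zero, pow_zero, mul_one]
  have hz' : (z : MvPowerSeries (Fin 2) k) = X 0 ^ (r - r) * X 1 ^ r := by
    rw [hz, Nat.sub_self, pow_zero, one_mul]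
  have hxK : x ∈ K := by
    rw [hK]; exact Ideal.subset_span ⟨r - 1, by omega, le_rfl, hx'⟩
  have hy𝔪 : y ∈ 𝔪 := by
    rw [h𝔪]; exact Ideal.subset_span ⟨0, by omega, hy'⟩
  have hz𝔪 : z ∈ 𝔪 := by
    rw [h𝔪]; exact Ideal.subset_span ⟨r, le_rfl, hz'⟩
  constructor
  · apply le_antisymm
    · conv_lhs => rw [h𝔪, hK, Ideal.span_mul_span']
      rw [Ideal.span_le]
      rintro p hp
      rw [Set.mem_mul] at hp
      obtain ⟨a, ⟨i, hi, ha⟩, b, ⟨j, hj1, hj2, hb⟩, rfl⟩ := hp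
      rcases le_or_gt (i + j) (r - 1) with hij | hij
      · obtain ⟨c, hc⟩ : ∃ c : ↥A, (c : MvPowerSeries (Fin 2) k) =
            X 0 ^ (r - (i + j)) * X 1 ^ (i + j) := ⟨⟨_, M_mem (i + j) (by omega)⟩, rfl⟩
        have hcK : c ∈ K := by
          rw [hK]; exact Ideal.subset_span ⟨i + j, by omega, by omega, hc⟩
        have heq : a * b = y * c := by
          apply Subtype.ext
          rw [Subalgebra.coe_mul, Subalgebra.coe_mul, ha, hb, hy', hc]
          exact comb (r - i) i (r - j) j (r - 0) 0 (r - (i + j)) (i + j)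
            (by omega) (by omega)
        rw [heq]
        exact Ideal.mem_sup_left
          (Ideal.mul_mem_mul (Ideal.mem_span_singleton_self y) hcK)
      · obtain ⟨c, hc⟩ : ∃ c : ↥A, (c : MvPowerSeries (Fin 2) k) =
            X 0 ^ (r - (i + j + 1 - r)) * X 1 ^ (i + j + 1 - r) :=
          ⟨⟨_, M_mem (i + j + 1 - r) (by omega)⟩, rfl⟩
        have hc𝔪 : c ∈ 𝔪 := by
          rw [h𝔪]; exact Ideal.subset_span ⟨i + j + 1 - r, by omega, hc⟩
        have heq : a * b = c * x := by
          apply Subtype.ext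
          rw [Subalgebra.coe_mul, Subalgebra.coe_mul, ha, hb, hx', hc]
          exact comb (r - i) i (r - j) j (r - (i + j + 1 - r)) (i + j + 1 - r)
            (r - (r - 1)) (r - 1) (by omega) (by omega)
        rw [heq]
        exact Ideal.mem_sup_right
          (Ideal.mul_mem_mul hc𝔪 (Ideal.mem_span_singleton_self x))
    · apply sup_le
      · exact Ideal.mul_mono_left (Ideal.span_le.mpr (Set.singleton_subset_iff.mpr hy𝔪))
      · exact Ideal.mul_mono_right (Ideal.span_le.mpr (Set.singleton_subset_iff.mpr hxK))
  · apply le_antisymm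
    · conv_lhs => rw [pow_two, h𝔪, Ideal.span_mul_span']
      rw [Ideal.span_le]
      rintro p hp
      rw [Set.mem_mul] at hp
      obtain ⟨a, ⟨i, hi, ha⟩, b, ⟨j, hj, hb⟩, rfl⟩ := hp
      rcases le_or_gt (i + j) r with hij | hij
      · obtain ⟨c, hc⟩ : ∃ c : ↥A, (c : MvPowerSeries (Fin 2) k) =
            X 0 ^ (r - (i + j)) * X 1 ^ (i + j) := ⟨⟨_, M_mem (i + j) hij⟩, rfl⟩
        have hc𝔪 : c ∈ 𝔪 := by
          rw [h𝔪]; exact Ideal.subset_span ⟨i + j, hij, hc⟩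
        have heq : a * b = y * c := by
          apply Subtype.ext
          rw [Subalgebra.coe_mul, Subalgebra.coe_mul, ha, hb, hy', hc]
          exact comb (r - i) i (r - j) j (r - 0) 0 (r - (i + j)) (i + j)
            (by omega) (by omega)
        rw [heq]
        exact Ideal.mul_mem_mul (Ideal.subset_span (Set.mem_insert y {z})) hc𝔪
      · obtain ⟨c, hc⟩ : ∃ c : ↥A, (c : MvPowerSeries (Fin 2) k) =
            X 0 ^ (r - (i + j - r)) * X 1 ^ (i + j - r) :=
          ⟨⟨_, M_mem (i + j - r) (by omega)⟩, rfl⟩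
        have hc𝔪 : c ∈ 𝔪 := by
          rw [h𝔪]; exact Ideal.subset_span ⟨i + j - r, by omega, hc⟩
        have heq : a * b = z * c := by
          apply Subtype.ext
          rw [Subalgebra.coe_mul, Subalgebra.coe_mul, ha, hb, hz', hc]
          exact comb (r - i) i (r - j) j (r - r) r (r - (i + j - r)) (i + j - r)
            (by omega) (by omega)
        rw [heq]
        exact Ideal.mul_mem_mul
          (Ideal.subset_span (Set.mem_insert_of_mem y rfl)) hc𝔪
    · have hle : Ideal.span {y, z} ≤ 𝔪 := by
        rw [Ideal.span_le]
        rintro p hp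
        simp only [Set.mem_insert_iff, Set.mem_singleton_iff] at hp
        rcases hp with rfl | rfl
        · exact hy𝔪
        · exact hz𝔪
      calc Ideal.span {y, z} * 𝔪 ≤ 𝔪 * 𝔪 := Ideal.mul_mono_left hle
        _ = 𝔪 ^ 2 := (pow_two 𝔪).symm
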